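/- A unital single-qubit channel with Bloch matrix Λ = diag(λ₁,λ₂,λ₃) is entanglement-breaking (measure-and-prepare) if and only if |λ₁| + |λ₂| + |λ₃| ≤ 1. -/

import Mathlib

open Matrix Complex Kronecker
open scoped ComplexOrder

/-- The Pauli matrix `σ_x`. -/
def pauliX : Matrix (Fin 2) (Fin 2) ℂ := !![0, 1; 1, 0]

/-- The Pauli matrix `σ_y`. -/
def pauliY : Matrix (Fin 2) (Fin 2) ℂ := !![0, -I; I, 0]

/-- The Pauli matrix `σ_z`. -/
def pauliZ : Matrix (Fin 2) (Fin 2) ℂ := !![1, 0; 0, -1]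

/-- The Choi matrix of a unital single-qubit channel with Bloch matrix
`Λ = diag(λ₁,λ₂,λ₃)`: `ρ_M = ¼[𝟙⊗𝟙 + Σᵢ λᵢ σᵢᵀ⊗σᵢ]`. -/
noncomputable def choiUnital (l1 l2 l3 : ℝ) :
    Matrix (Fin 2 × Fin 2) (Fin 2 × Fin 2) ℂ :=
  (1 / 4 : ℂ) • ((1 : Matrix (Fin 2) (Fin 2) ℂ) ⊗ₖ (1 : Matrix (Fin 2) (Fin 2) ℂ)
    + (l1 : ℂ) • (pauliXᵀ ⊗ₖ pauliX)
    + (l2 : ℂ) • (pauliYᵀ ⊗ₖ pauliY)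
    + (l3 : ℂ) • (pauliZᵀ ⊗ₖ pauliZ))

/-- Separability of a two-qubit matrix: a convex combination of tensor products
of positive semidefinite matrices. -/
def SeparableState (ρ : Matrix (Fin 2 × Fin 2) (Fin 2 × Fin 2) ℂ) : Prop :=
  ∃ (n : ℕ) (w : Fin n → ℝ) (A B : Fin n → Matrix (Fin 2) (Fin 2) ℂ),
    (∀ i, 0 ≤ w i) ∧ (∀ i, (A i).PosSemidef) ∧ (∀ i, (B i).PosSemidef) ∧
    ρ = ∑ i, (w i : ℂ) • (A i ⊗ₖ B i)

lemma psd_smul' {c : ℝ} (hc : 0 ≤ c) {n : Type*} [Fintype n] {M : Matrix n n ℂ}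
    (hM : M.PosSemidef) : ((c : ℂ) • M).PosSemidef := by
  refine Matrix.PosSemidef.of_dotProduct_mulVec_nonneg ?_ ?_
  · unfold Matrix.IsHermitian
    rw [Matrix.conjTranspose_smul, hM.1.eq]
    congr 1
    simp [Complex.star_def]
  · intro x
    rw [Matrix.smul_mulVec, dotProduct_smul]
    exact smul_nonneg (by exact_mod_cast hc) (hM.dotProduct_mulVec_nonneg x)

lemma psd_sum' {k : ℕ} {n : Type*} [Fintype n] (f : Fin k → Matrix n n ℂ)
    (h : ∀ i, (f i).PosSemidef) : (∑ i, f i).PosSemidef :=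
  Finset.sum_induction f _ (fun _ _ ha hb => ha.add hb) Matrix.PosSemidef.zero
    (fun i _ => h i)

lemma psd_kron' {A B : Matrix (Fin 2) (Fin 2) ℂ} (hA : A.PosSemidef)
    (hB : B.PosSemidef) : (A ⊗ₖ B).PosSemidef := by
  exact hA.kronecker hB

lemma pauliX_t : pauliXᵀ = pauliX := by
  ext i j; fin_cases i <;> fin_cases j <;> simp [pauliX]

lemma pauliY_t : pauliYᵀ = -pauliY := by
  ext i j; fin_cases i <;> fin_cases j <;> simp [pauliY]

lemma pauliZ_t : pauliZᵀ = pauliZ := by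
  ext i j; fin_cases i <;> fin_cases j <;> simp [pauliZ]

lemma choi_psd_ineqs {l1 l2 l3 : ℝ} (h : (choiUnital l1 l2 l3).PosSemidef) :
    -l1 - l2 - l3 ≤ 1 ∧ l1 + l2 - l3 ≤ 1 ∧ -l1 + l2 + l3 ≤ 1 ∧ l1 - l2 + l3 ≤ 1 := by
  have quad : ∀ M : Matrix (Fin 2) (Fin 2) ℂ, ∀ r : ℝ,
      ((star (fun p : Fin 2 × Fin 2 => M p.1 p.2)) ⬝ᵥ
        (choiUnital l1 l2 l3 *ᵥ (fun p : Fin 2 × Fin 2 => M p.1 p.2)) = ((r : ℝ) : ℂ))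
      → 0 ≤ r := by
    intro M r hr
    have := h.dotProduct_mulVec_nonneg (fun p : Fin 2 × Fin 2 => M p.1 p.2)
    rw [hr] at this
    exact_mod_cast Complex.zero_le_real.mp this
  have q1 := quad !![1,0;0,1] ((1 + l1 + l2 + l3)/2) ?_
  have q2 := quad !![1,0;0,-1] ((1 - l1 - l2 + l3)/2) ?_
  have q3 := quad !![0,1;1,0] ((1 + l1 - l2 - l3)/2) ?_
  have q4 := quad !![0,1;-1,0] ((1 - l1 + l2 - l3)/2) ?_
  · refine ⟨by linarith, by linarith, by linarith, by linarith⟩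
  all_goals
    simp [dotProduct, Matrix.mulVec, Fintype.sum_prod_type, Fin.sum_univ_two,
      choiUnital, pauliX_t, pauliY_t, pauliZ_t, pauliX, pauliY, pauliZ,
      Matrix.one_apply, Matrix.transpose_apply, Matrix.vecHead, Matrix.vecTail]
    push_cast
    ring

lemma choi_pt_entry (l1 l2 l3 : ℝ) (i j k l : Fin 2) :
    choiUnital l1 (-l2) l3 (i, j) (k, l) = choiUnital l1 l2 l3 (i, l) (k, j) := by
  fin_cases i <;> fin_cases j <;> fin_cases k <;> fin_cases l <;>
    simp [choiUnital, pauliX_t, pauliY_t, pauliZ_t, pauliX, pauliY, pauliZ,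
      Matrix.one_apply, Matrix.transpose_apply, Matrix.vecHead, Matrix.vecTail,
      Prod.ext_iff] <;>
    push_cast <;> ring_nf

lemma sep_pt_psd {l1 l2 l3 : ℝ} (hsep : SeparableState (choiUnital l1 l2 l3)) :
    (choiUnital l1 (-l2) l3).PosSemidef := by
  obtain ⟨n, w, A, B, hw, hA, hB, hsum⟩ := hsep
  have key : choiUnital l1 (-l2) l3 = ∑ i, (w i : ℂ) • (A i ⊗ₖ (B i)ᵀ) := by
    ext ⟨i, j⟩ ⟨k, l⟩
    have h1 := congrFun (congrFun (congrArg (fun M => M) hsum) (i, l)) (k, j)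
    rw [choi_pt_entry]
    rw [show choiUnital l1 l2 l3 (i, l) (k, j)
        = (∑ i, (w i : ℂ) • (A i ⊗ₖ B i)) (i, l) (k, j) from by rw [← hsum]]
    simp [Matrix.sum_apply, Matrix.smul_apply, Matrix.kroneckerMap_apply,
      Matrix.transpose_apply]
  rw [key]
  exact psd_sum' _ fun i => psd_smul' (hw i) (psd_kron' (hA i) ((hB i).transpose))

lemma psd_one_add_X : (1 + pauliX).PosSemidef := by
  have h : (1 + pauliX) = (!![1,1;0,0] : Matrix (Fin 2) (Fin 2) ℂ)ᴴ * !![1,1;0,0] := by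
    ext i j
    fin_cases i <;> fin_cases j <;>
      simp [pauliX, Matrix.one_apply, Matrix.mul_apply, Fin.sum_univ_two,
        Matrix.conjTranspose_apply]
  rw [h]; exact Matrix.posSemidef_conjTranspose_mul_self _

lemma psd_one_sub_X : (1 - pauliX).PosSemidef := by
  have h : (1 - pauliX) = (!![1,-1;0,0] : Matrix (Fin 2) (Fin 2) ℂ)ᴴ * !![1,-1;0,0] := by
    ext i j
    fin_cases i <;> fin_cases j <;>
      simp [pauliX, Matrix.one_apply, Matrix.mul_apply, Fin.sum_univ_two,
        Matrix.conjTranspose_apply]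
  rw [h]; exact Matrix.posSemidef_conjTranspose_mul_self _

lemma psd_one_add_Y : (1 + pauliY).PosSemidef := by
  have h : (1 + pauliY) = (!![1,-I;0,0] : Matrix (Fin 2) (Fin 2) ℂ)ᴴ * !![1,-I;0,0] := by
    ext i j
    fin_cases i <;> fin_cases j <;>
      simp [pauliY, Matrix.one_apply, Matrix.mul_apply, Fin.sum_univ_two,
        Matrix.conjTranspose_apply]
  rw [h]; exact Matrix.posSemidef_conjTranspose_mul_self _

lemma psd_one_sub_Y : (1 - pauliY).PosSemidef := by
  have h : (1 - pauliY) = (!![1,I;0,0] : Matrix (Fin 2) (Fin 2) ℂ)ᴴ * !![1,I;0,0] := by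
    ext i j
    fin_cases i <;> fin_cases j <;>
      simp [pauliY, Matrix.one_apply, Matrix.mul_apply, Fin.sum_univ_two,
        Matrix.conjTranspose_apply]
  rw [h]; exact Matrix.posSemidef_conjTranspose_mul_self _

lemma psd_one_add_Z : (1 + pauliZ).PosSemidef := by
  have h : (1 + pauliZ) = (!![1,0;1,0] : Matrix (Fin 2) (Fin 2) ℂ)ᴴ * !![1,0;1,0] := by
    ext i j
    fin_cases i <;> fin_cases j <;>
      simp [pauliZ, Matrix.one_apply, Matrix.mul_apply, Fin.sum_univ_two,
        Matrix.conjTranspose_apply] <;> norm_num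
  rw [h]; exact Matrix.posSemidef_conjTranspose_mul_self _

lemma psd_one_sub_Z : (1 - pauliZ).PosSemidef := by
  have h : (1 - pauliZ) = (!![0,1;0,1] : Matrix (Fin 2) (Fin 2) ℂ)ᴴ * !![0,1;0,1] := by
    ext i j
    fin_cases i <;> fin_cases j <;>
      simp [pauliZ, Matrix.one_apply, Matrix.mul_apply, Fin.sum_univ_two,
        Matrix.conjTranspose_apply] <;> norm_num
  rw [h]; exact Matrix.posSemidef_conjTranspose_mul_self _
set_option maxHeartbeats 1600000 in
/-- A unital single-qubit channel with Bloch matrix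
`Λ = diag(λ₁,λ₂,λ₃)` is entanglement-breaking (measure-and-prepare), i.e. its
Choi matrix is separable, if and only if `|λ₁| + |λ₂| + |λ₃| ≤ 1`. -/
theorem unital_qubit_entanglement_breaking_iff (l1 l2 l3 : ℝ)
    (hchannel : (choiUnital l1 l2 l3).PosSemidef) :
    SeparableState (choiUnital l1 l2 l3) ↔ |l1| + |l2| + |l3| ≤ 1 := by
  constructor
  · intro hsep
    obtain ⟨h1, h2, h3, h4⟩ := choi_psd_ineqs hchannel
    obtain ⟨h5, h6, h7, h8⟩ := choi_psd_ineqs (sep_pt_psd hsep)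
    rcases abs_cases l1 with ⟨e1, _⟩ | ⟨e1, _⟩ <;>
      rcases abs_cases l2 with ⟨e2, _⟩ | ⟨e2, _⟩ <;>
      rcases abs_cases l3 with ⟨e3, _⟩ | ⟨e3, _⟩ <;>
      rw [e1, e2, e3] <;> linarith
  · intro habs
    refine ⟨13,
      ![(|l1|+l1)/16, (|l1|+l1)/16, (|l1|-l1)/16, (|l1|-l1)/16,
        (|l2|+l2)/16, (|l2|+l2)/16, (|l2|-l2)/16, (|l2|-l2)/16,
        (|l3|+l3)/16, (|l3|+l3)/16, (|l3|-l3)/16, (|l3|-l3)/16,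
        (1-(|l1|+|l2|+|l3|))/4],
      ![1+pauliX, 1-pauliX, 1+pauliX, 1-pauliX,
        1-pauliY, 1+pauliY, 1-pauliY, 1+pauliY,
        1+pauliZ, 1-pauliZ, 1+pauliZ, 1-pauliZ, 1],
      ![1+pauliX, 1-pauliX, 1-pauliX, 1+pauliX,
        1+pauliY, 1-pauliY, 1-pauliY, 1+pauliY,
        1+pauliZ, 1-pauliZ, 1-pauliZ, 1+pauliZ, 1],
      ?_, ?_, ?_, ?_⟩
    · simp only [Fin.forall_fin_succ, Matrix.cons_val_zero, Matrix.cons_val_succ]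
      refine ⟨?_,?_,?_,?_,?_,?_,?_,?_,?_,?_,?_,?_,?_,fun i => i.elim0⟩ <;>
        linarith [le_abs_self l1, neg_abs_le l1, le_abs_self l2, neg_abs_le l2,
          le_abs_self l3, neg_abs_le l3]
    · simp only [Fin.forall_fin_succ, Matrix.cons_val_zero, Matrix.cons_val_succ]
      exact ⟨psd_one_add_X, psd_one_sub_X, psd_one_add_X, psd_one_sub_X,
        psd_one_sub_Y, psd_one_add_Y, psd_one_sub_Y, psd_one_add_Y,
        psd_one_add_Z, psd_one_sub_Z, psd_one_add_Z, psd_one_sub_Z,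
        Matrix.PosSemidef.one, fun i => i.elim0⟩
    · simp only [Fin.forall_fin_succ, Matrix.cons_val_zero, Matrix.cons_val_succ]
      exact ⟨psd_one_add_X, psd_one_sub_X, psd_one_sub_X, psd_one_add_X,
        psd_one_add_Y, psd_one_sub_Y, psd_one_sub_Y, psd_one_add_Y,
        psd_one_add_Z, psd_one_sub_Z, psd_one_sub_Z, psd_one_add_Z,
        Matrix.PosSemidef.one, fun i => i.elim0⟩
    · ext ⟨i, j⟩ ⟨k, l⟩
      simp only [Matrix.sum_apply, Fin.sum_univ_succ, Fin.sum_univ_zero,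
        Matrix.cons_val_zero, Matrix.cons_val_succ, Matrix.smul_apply,
        Matrix.kroneckerMap_apply, Matrix.add_apply, Matrix.sub_apply,
        smul_eq_mul, add_zero]
      fin_cases i <;> fin_cases j <;> fin_cases k <;> fin_cases l <;>
        simp [choiUnital, pauliX_t, pauliY_t, pauliZ_t,
          pauliX, pauliY, pauliZ, Matrix.one_apply, Matrix.transpose_apply,
          Matrix.vecHead, Matrix.vecTail, Prod.ext_iff] <;>
        push_cast <;> ring_nf
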